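/- Let σ : ℝ → ℝ be C¹ with bounded and Lipschitz derivative (|σ'| ≤ K and |σ'(x) - σ'(y)| ≤ L|x-y|), and ν a finite signed measure on [-τ,0] with total variation mass m = |ν|([-τ,0]). Define f(ψ) = σ(∫_{-τ}^0 ψ dν). Then for all ψ₁, ψ₂, ψ₃, ψ₄ ∈ C([-τ,0];ℝ): |f(ψ₁) - f(ψ₂) - f(ψ₃) + f(ψ₄)| ≤ K m ‖ψ₁ - ψ₂ - ψ₃ + ψ₄‖_∞ + (L m²/1) ‖ψ₃ - ψ₄‖_∞ (‖ψ₁ - ψ₂ - ψ₃ + ψ₄‖_∞ + ‖ψ₂ - ψ₄‖_∞). -/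

import Mathlib

open MeasureTheory

/-- Integral of a function against a finite signed measure, via the Jordan
decomposition. -/
noncomputable def signedIntegral {Ω : Type*} [MeasurableSpace Ω]
    (ν : SignedMeasure Ω) (f : Ω → ℝ) : ℝ :=
  ∫ x, f x ∂ν.toJordanDecomposition.posPart - ∫ x, f x ∂ν.toJordanDecomposition.negPart

lemma scalar_ineq (σ : ℝ → ℝ) (K L : ℝ) (hσ : ContDiff ℝ 1 σ)
    (hK : ∀ x : ℝ, |deriv σ x| ≤ K)
    (hL : ∀ x y : ℝ, |deriv σ x - deriv σ y| ≤ L * |x - y|)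
    (a b c d : ℝ) :
    |σ a - σ b - σ c + σ d| ≤
      K * |a - b - c + d| + L * |c - d| * (|a - b - c + d| + |b - d|) := by
  set e := a - b - c + d with he
  have hdiff : Differentiable ℝ σ := hσ.differentiable one_ne_zero
  set g : ℝ → ℝ := fun t => σ (b + t * (a - b)) - σ (d + t * (c - d)) with hg
  set g' : ℝ → ℝ := fun t =>
    deriv σ (b + t * (a - b)) * (a - b) - deriv σ (d + t * (c - d)) * (c - d) with hg'
  have hgd : ∀ t : ℝ, HasDerivAt g (g' t) t := by
    intro t
    have h1 : HasDerivAt (fun t : ℝ => b + t * (a - b)) (a - b) t := by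
      simpa using ((hasDerivAt_id t).mul_const (a - b)).const_add b
    have h2 : HasDerivAt (fun t : ℝ => d + t * (c - d)) (c - d) t := by
      simpa using ((hasDerivAt_id t).mul_const (c - d)).const_add d
    exact ((hdiff _).hasDerivAt.comp t h1).sub ((hdiff _).hasDerivAt.comp t h2)
  have hC : ∀ t ∈ Set.Icc (0:ℝ) 1, ‖g' t‖ ≤ K * |e| + L * |c - d| * (|e| + |b - d|) := by
    intro t ht
    have hrw : g' t = deriv σ (b + t * (a - b)) * e
        + (deriv σ (b + t * (a - b)) - deriv σ (d + t * (c - d))) * (c - d) := by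
      simp only [hg', he]; ring
    rw [Real.norm_eq_abs, hrw]
    calc |deriv σ (b + t * (a - b)) * e
        + (deriv σ (b + t * (a - b)) - deriv σ (d + t * (c - d))) * (c - d)|
        ≤ |deriv σ (b + t * (a - b))| * |e|
          + |deriv σ (b + t * (a - b)) - deriv σ (d + t * (c - d))| * |c - d| := by
          rw [← abs_mul, ← abs_mul]; exact abs_add_le _ _
      _ ≤ K * |e| + (L * |(b + t * (a - b)) - (d + t * (c - d))|) * |c - d| := by
          exact add_le_add (mul_le_mul_of_nonneg_right (hK _) (abs_nonneg _))
            (mul_le_mul_of_nonneg_right (hL _ _) (abs_nonneg _))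
      _ ≤ K * |e| + (L * (|b - d| + |e|)) * |c - d| := by
          have hL0 : 0 ≤ L := by
            have := hL 0 1; simp at this; linarith [abs_nonneg (deriv σ 0 - deriv σ 1)]
          refine add_le_add_right (mul_le_mul_of_nonneg_right
            (mul_le_mul_of_nonneg_left ?_ hL0) (abs_nonneg _)) _
          have : (b + t * (a - b)) - (d + t * (c - d)) = (b - d) + t * e := by
            rw [he]; ring
          rw [this]
          calc |(b - d) + t * e| ≤ |b - d| + |t * e| := abs_add_le _ _
            _ ≤ |b - d| + |e| := by
                rw [abs_mul]
                nlinarith [abs_nonneg e, ht.1, ht.2, abs_of_nonneg ht.1, abs_nonneg t]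
      _ = K * |e| + L * |c - d| * (|e| + |b - d|) := by ring
  have key := (convex_Icc (0:ℝ) 1).norm_image_sub_le_of_norm_hasDerivWithin_le
    (fun t _ => (hgd t).hasDerivWithinAt) hC (Set.left_mem_Icc.2 zero_le_one)
    (Set.right_mem_Icc.2 zero_le_one)
  have hg10 : g 1 - g 0 = σ a - σ b - σ c + σ d := by simp [hg]; ring
  rw [← hg10]
  simpa using key

lemma cm_integrable {τ : ℝ} (μ : Measure (Set.Icc (-τ) (0:ℝ))) [IsFiniteMeasure μ]
    (f : C(Set.Icc (-τ) (0:ℝ), ℝ)) : Integrable f μ :=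
  (BoundedContinuousFunction.mkOfCompact f).integrable μ

lemma sI_sub {τ : ℝ} (ν : SignedMeasure (Set.Icc (-τ) (0:ℝ)))
    (f g : C(Set.Icc (-τ) (0:ℝ), ℝ)) :
    signedIntegral ν ⇑(f - g) = signedIntegral ν f - signedIntegral ν g := by
  simp only [signedIntegral, ContinuousMap.coe_sub, Pi.sub_apply]
  rw [integral_sub (cm_integrable _ f) (cm_integrable _ g),
    integral_sub (cm_integrable _ f) (cm_integrable _ g)]
  ring

lemma sI_add {τ : ℝ} (ν : SignedMeasure (Set.Icc (-τ) (0:ℝ)))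
    (f g : C(Set.Icc (-τ) (0:ℝ), ℝ)) :
    signedIntegral ν ⇑(f + g) = signedIntegral ν f + signedIntegral ν g := by
  simp only [signedIntegral, ContinuousMap.coe_add, Pi.add_apply]
  rw [integral_add (cm_integrable _ f) (cm_integrable _ g),
    integral_add (cm_integrable _ f) (cm_integrable _ g)]
  ring

lemma sI_bound {τ : ℝ} (ν : SignedMeasure (Set.Icc (-τ) (0:ℝ)))
    (f : C(Set.Icc (-τ) (0:ℝ), ℝ)) :
    |signedIntegral ν f| ≤ (ν.totalVariation Set.univ).toReal * ‖f‖ := by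
  have hb : ∀ (μ : Measure (Set.Icc (-τ) (0:ℝ))) [IsFiniteMeasure μ],
      |∫ x, f x ∂μ| ≤ ‖f‖ * (μ Set.univ).toReal := by
    intro μ _
    have := norm_integral_le_of_norm_le_const (μ := μ) (C := ‖f‖)
      (Filter.Eventually.of_forall fun x => f.norm_coe_le_norm x)
    simpa [Real.norm_eq_abs, Measure.restrict_univ, measureReal_def] using this
  have h1 := hb ν.toJordanDecomposition.posPart
  have h2 := hb ν.toJordanDecomposition.negPart
  have hm : (ν.totalVariation Set.univ).toReal =
      (ν.toJordanDecomposition.posPart Set.univ).toReal +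
      (ν.toJordanDecomposition.negPart Set.univ).toReal := by
    rw [SignedMeasure.totalVariation, Measure.add_apply,
      ENNReal.toReal_add (measure_ne_top _ _) (measure_ne_top _ _)]
  rw [signedIntegral, hm]
  calc |(∫ x, f x ∂ν.toJordanDecomposition.posPart) -
      ∫ x, f x ∂ν.toJordanDecomposition.negPart|
      ≤ |∫ x, f x ∂ν.toJordanDecomposition.posPart| +
        |∫ x, f x ∂ν.toJordanDecomposition.negPart| := abs_sub _ _
    _ ≤ ‖f‖ * (ν.toJordanDecomposition.posPart Set.univ).toReal +
        ‖f‖ * (ν.toJordanDecomposition.negPart Set.univ).toReal := add_le_add h1 h2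
    _ = _ := by ring

/-- If `σ` is C¹ with `|σ'| ≤ K` and `σ'` `L`-Lipschitz, `ν` a finite
signed measure on `[-τ,0]` of total variation mass `m`, and `f(ψ) = σ(∫ ψ dν)`, then
for all `ψ₁, ψ₂, ψ₃, ψ₄ ∈ C([-τ,0];ℝ)`:
`|f ψ₁ - f ψ₂ - f ψ₃ + f ψ₄| ≤ K m ‖ψ₁ - ψ₂ - ψ₃ + ψ₄‖ +
  L m² ‖ψ₃ - ψ₄‖ (‖ψ₁ - ψ₂ - ψ₃ + ψ₄‖ + ‖ψ₂ - ψ₄‖)`. -/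
theorem stmt_8 (τ : ℝ) (hτ : 0 < τ) (σ : ℝ → ℝ) (K L : ℝ)
    (hσ : ContDiff ℝ 1 σ) (hK : ∀ x : ℝ, |deriv σ x| ≤ K)
    (hL : ∀ x y : ℝ, |deriv σ x - deriv σ y| ≤ L * |x - y|)
    (ν : SignedMeasure (Set.Icc (-τ) (0:ℝ)))
    (m : ℝ) (hm : m = (ν.totalVariation Set.univ).toReal)
    (ψ₁ ψ₂ ψ₃ ψ₄ : C(Set.Icc (-τ) (0:ℝ), ℝ)) :
    |σ (signedIntegral ν ψ₁) - σ (signedIntegral ν ψ₂) -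
        σ (signedIntegral ν ψ₃) + σ (signedIntegral ν ψ₄)| ≤
      K * m * ‖ψ₁ - ψ₂ - ψ₃ + ψ₄‖ +
        L * m ^ 2 * ‖ψ₃ - ψ₄‖ * (‖ψ₁ - ψ₂ - ψ₃ + ψ₄‖ + ‖ψ₂ - ψ₄‖) := by
  set a := signedIntegral ν ψ₁
  set b := signedIntegral ν ψ₂
  set c := signedIntegral ν ψ₃
  set d := signedIntegral ν ψ₄
  have h1 : a - b - c + d = signedIntegral ν ⇑(ψ₁ - ψ₂ - ψ₃ + ψ₄) := by
    rw [sI_add, sI_sub, sI_sub]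
  have h2 : c - d = signedIntegral ν ⇑(ψ₃ - ψ₄) := (sI_sub ν ψ₃ ψ₄).symm
  have h3 : b - d = signedIntegral ν ⇑(ψ₂ - ψ₄) := (sI_sub ν ψ₂ ψ₄).symm
  have b1 : |a - b - c + d| ≤ m * ‖ψ₁ - ψ₂ - ψ₃ + ψ₄‖ := by
    rw [h1, hm]; exact sI_bound ν _
  have b2 : |c - d| ≤ m * ‖ψ₃ - ψ₄‖ := by rw [h2, hm]; exact sI_bound ν _
  have b3 : |b - d| ≤ m * ‖ψ₂ - ψ₄‖ := by rw [h3, hm]; exact sI_bound ν _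
  have hK0 : 0 ≤ K := le_trans (abs_nonneg _) (hK 0)
  have hL0 : 0 ≤ L := by
    have := hL 0 1; simp at this; linarith [abs_nonneg (deriv σ 0 - deriv σ 1)]
  have hm0 : 0 ≤ m := by rw [hm]; exact ENNReal.toReal_nonneg
  calc |σ a - σ b - σ c + σ d|
      ≤ K * |a - b - c + d| + L * |c - d| * (|a - b - c + d| + |b - d|) :=
        scalar_ineq σ K L hσ hK hL a b c d
    _ ≤ K * (m * ‖ψ₁ - ψ₂ - ψ₃ + ψ₄‖) +
        L * (m * ‖ψ₃ - ψ₄‖) * ((m * ‖ψ₁ - ψ₂ - ψ₃ + ψ₄‖) + (m * ‖ψ₂ - ψ₄‖)) := by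
        have t1 : K * |a - b - c + d| ≤ K * (m * ‖ψ₁ - ψ₂ - ψ₃ + ψ₄‖) :=
          mul_le_mul_of_nonneg_left b1 hK0
        have t2 : L * |c - d| ≤ L * (m * ‖ψ₃ - ψ₄‖) := mul_le_mul_of_nonneg_left b2 hL0
        have t3 : |a - b - c + d| + |b - d| ≤
            m * ‖ψ₁ - ψ₂ - ψ₃ + ψ₄‖ + m * ‖ψ₂ - ψ₄‖ := add_le_add b1 b3
        refine add_le_add t1 (mul_le_mul t2 t3 (by positivity) ?_)
        exact mul_nonneg hL0 (mul_nonneg hm0 (norm_nonneg _))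
    _ = K * m * ‖ψ₁ - ψ₂ - ψ₃ + ψ₄‖ +
        L * m ^ 2 * ‖ψ₃ - ψ₄‖ * (‖ψ₁ - ψ₂ - ψ₃ + ψ₄‖ + ‖ψ₂ - ψ₄‖) := by ring
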